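/- arXiv:1701.03920 — 3 statements merged into one kernel-verified Lean document; each statement's English description precedes it below -/
import Mathlib

section
/- Let n be a positive integer and let p < q be indices in {0,…,n−1}. The element x = (1 + e_p·e_q)/√2 of the Clifford algebra Cₙ lies in the spin group Spin(n), and for every vector v ∈ ℝⁿ one has x·ι(v)·x̄ = ι(w), where w is the vector with w_p = −v_q, w_q = v_p, and w_i = v_i for all i ∉ {p, q}. (In other words, the twisted conjugation λ(x) equals the signed transposition matrix P′_{(p q)} = diag(1,…,1,−1,1,…,1)·P_{(p q)}, with the −1 in position p, where P_{(p q)} is the permutation matrix of the transposition (p q).) -/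
open CliffordAlgebra

/-- The quadratic form `Q(v) = -∑ i, v i ^ 2` on `ℝⁿ = (Fin n → ℝ)`. -/
noncomputable def Qneg (n : ℕ) : QuadraticForm ℝ (Fin n → ℝ) :=
  QuadraticMap.weightedSumSquares ℝ (fun _ : Fin n => (-1 : ℝ))

/-- The Clifford algebra `Cₙ` of `Qneg n`. -/
noncomputable abbrev Cl (n : ℕ) := CliffordAlgebra (Qneg n)

/-- The generator `eᵢ = ι(εᵢ)`, the image of the `i`-th standard basis vector. -/
noncomputable def e {n : ℕ} (i : Fin n) : Cl n := ι (Qneg n) (Pi.single i 1)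

/-- The Clifford conjugate `x̄ = reverse (involute x)`. -/
noncomputable def conj {n : ℕ} (x : Cl n) : Cl n := reverse (involute x)

/-- `x` lies in the spin group `Spin(n)`: it is a unit with `involute x = x` and `x * x̄ = 1`. -/
def InSpin {n : ℕ} (x : Cl n) : Prop :=
  IsUnit x ∧ involute x = x ∧ x * conj x = 1

lemma Qneg_apply {n : ℕ} (v : Fin n → ℝ) : Qneg n v = -∑ i, v i * v i := by
  simp [Qneg, QuadraticMap.weightedSumSquares_apply, Finset.sum_neg_distrib]

lemma Qneg_polar {n : ℕ} (u v : Fin n → ℝ) :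
    QuadraticMap.polar (Qneg n) u v = -2 * ∑ i, u i * v i := by
  simp only [QuadraticMap.polar, Qneg_apply, Pi.add_apply]
  rw [Finset.mul_sum, sub_neg_eq_add, ← Finset.sum_neg_distrib, ← Finset.sum_neg_distrib,
    sub_eq_add_neg, ← Finset.sum_neg_distrib, ← Finset.sum_add_distrib, ← Finset.sum_add_distrib]
  exact Finset.sum_congr rfl fun i _ => by ring

lemma Qneg_polar_single {n : ℕ} (i : Fin n) (v : Fin n → ℝ) :
    QuadraticMap.polar (Qneg n) (Pi.single i 1) v = -2 * v i := by
  rw [Qneg_polar]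
  simp [Pi.single_apply, Finset.mul_sum, Finset.sum_ite_eq, ite_mul, Finset.sum_ite_eq']

lemma e_mul_ι {n : ℕ} (i : Fin n) (u : Fin n → ℝ) :
    e i * ι (Qneg n) u = algebraMap ℝ (Cl n) (-2 * u i) - ι (Qneg n) u * e i := by
  rw [e, ι_mul_ι_comm, Qneg_polar_single]

lemma e_sq {n : ℕ} (i : Fin n) : e i * e i = -1 := by
  rw [e, ι_sq_scalar, Qneg_apply]
  have : ∑ j, (Pi.single i 1 : Fin n → ℝ) j * (Pi.single i 1 : Fin n → ℝ) j = 1 := by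
    simp [Pi.single_apply, ite_mul, Finset.sum_ite_eq']
  rw [this, map_neg, map_one]

lemma e_anticomm {n : ℕ} {i j : Fin n} (h : i ≠ j) : e j * e i = -(e i * e j) := by
  rw [e, e, ι_mul_ι_comm, Qneg_polar_single]
  have : (Pi.single i 1 : Fin n → ℝ) j = 0 := Pi.single_eq_of_ne (Ne.symm h) 1
  rw [this, mul_zero, map_zero, zero_sub]


/-- The element `x = (1 + eₚ e_q)/√2` lies in `Spin(n)`, and its twisted conjugation is the
signed transposition `P'_{(p q)}`: it sends `v` to the vector `w` with `w p = - v q`,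
`w q = v p` and `w i = v i` otherwise. -/
theorem stmt0 (n : ℕ) (hn : 0 < n) (p q : Fin n) (hpq : p < q)
    (x : Cl n) (hx : x = (Real.sqrt 2)⁻¹ • (1 + e p * e q)) :
    InSpin x ∧ ∀ v : Fin n → ℝ,
      x * ι (Qneg n) v * conj x =
        ι (Qneg n) (fun i => if i = p then -(v q) else if i = q then v p else v i) := by
  have hne : p ≠ q := ne_of_lt hpq
  set r : ℝ := (Real.sqrt 2)⁻¹ with hr
  have hr2 : r * r = 1/2 := by
    rw [hr, ← mul_inv, Real.mul_self_sqrt (by norm_num : (0:ℝ) ≤ 2)]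
    norm_num
  set A : Cl n := e p * e q with hA
  have hAA : A * A = -1 := by
    rw [hA, ← mul_assoc, mul_assoc (e p), e_anticomm hne, mul_neg, neg_mul, ← mul_assoc (e p),
      e_sq, neg_one_mul, neg_mul, neg_neg, e_sq]
  have hinv : involute x = x := by
    rw [hx]
    simp only [map_smul, map_add, map_one, map_mul, hA, e, involute_ι, neg_mul_neg]
  have hc : conj x = r • (1 - A) := by
    rw [conj, hinv, hx]
    simp only [map_smul, map_add, reverse.map_one, hA, reverse.map_mul, e, reverse_ι]
    rw [← e, ← e, e_anticomm hne, ← sub_eq_add_neg]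
  have hmul : x * conj x = 1 := by
    rw [hc, hx, smul_mul_assoc, mul_smul_comm, smul_smul, hr2]
    rw [mul_sub, add_mul, add_mul, mul_one, mul_one, one_mul, hAA]
    rw [show (1:Cl n) + A - (A + -1) = 1 + 1 by abel]
    rw [smul_add, ← add_smul]
    norm_num
  have hmul' : conj x * x = 1 := by
    rw [hc, hx, smul_mul_assoc, mul_smul_comm, smul_smul, hr2]
    rw [sub_mul, mul_add, mul_add, mul_one, mul_one, one_mul, hAA]
    rw [show (1:Cl n) + A - (A + -1) = 1 + 1 by abel]
    rw [smul_add, ← add_smul]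
    norm_num
  refine ⟨⟨⟨⟨x, conj x, hmul, hmul'⟩, rfl⟩, hinv, hmul⟩, ?_⟩
  intro v
  set V : Cl n := ι (Qneg n) v with hV
  set cp : Cl n := algebraMap ℝ (Cl n) (-2 * v p) with hcp
  set cq : Cl n := algebraMap ℝ (Cl n) (-2 * v q) with hcq
  have hp : e p * V = cp - V * e p := by rw [hV, hcp]; exact e_mul_ι p v
  have hq : e q * V = cq - V * e q := by rw [hV, hcq]; exact e_mul_ι q v
  have hpA : e p * A = -(e q) := by rw [hA, ← mul_assoc, e_sq, neg_one_mul]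
  have hqA : e q * A = e p := by
    rw [hA, ← mul_assoc, e_anticomm hne, neg_mul, mul_assoc, e_sq, mul_neg, mul_one, neg_neg]
  have h1 : A * V = cq * e p - cp * e q + V * A := by
    rw [hA, mul_assoc, hq, mul_sub, ← mul_assoc (e p) V (e q), hp, ← Algebra.commutes, sub_mul,
      mul_assoc]
    abel
  have hAVA : A * V * A = -(cq * e q) - cp * e p - V := by
    rw [h1, add_mul, sub_mul, mul_assoc cq, hpA, mul_assoc cp, hqA, mul_assoc V, hAA,
      mul_neg_one, mul_neg]
    abel
  have key : (1 + A) * V * (1 - A) = V + V + (cq + cp) * e p + (cq - cp) * e q := by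
    calc (1 + A) * V * (1 - A) = V + A * V - V * A - A * V * A := by noncomm_ring
    _ = V + (cq * e p - cp * e q + V * A) - V * A - (-(cq * e q) - cp * e p - V) := by
        rw [hAVA, h1]
    _ = V + V + (cq + cp) * e p + (cq - cp) * e q := by noncomm_ring
  have hw : (fun i => if i = p then -(v q) else if i = q then v p else v i)
      = v + (-(v q) - v p) • (Pi.single p 1 : Fin n → ℝ)
          + (v p - v q) • (Pi.single q 1 : Fin n → ℝ) := by
    funext i
    by_cases h1 : i = p
    · subst h1; simp [Pi.single_apply, hne, Ne.symm hne]
    · by_cases h2 : i = q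
      · subst h2; simp [Pi.single_apply, hne, Ne.symm hne, h1]
      · simp [Pi.single_apply, h1, h2]
  rw [hc, hx, smul_mul_assoc, smul_mul_assoc, mul_smul_comm, smul_smul, hr2, key, hw, map_add, map_add,
    map_smul, map_smul, ← hV]
  rw [show ι (Qneg n) (Pi.single p 1) = e p from rfl, show ι (Qneg n) (Pi.single q 1) = e q from rfl]
  simp only [hcp, hcq, ← map_add, ← map_sub, ← Algebra.smul_def]
  module
end

section
/- The group presented on three generators a, b, c with relations c² = 1, ac = ca, bc = cb, a³ = c, b² = c, and (ba)² = c is isomorphic to the dicyclic group of order 12 (Mathlib's QuaternionGroup 3), i.e. the semidirect product C₃ ⋊ C₄. -/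
/-- Three generators `a`, `b`, `c`. -/
inductive Gen3 | a | b | c

/-- Relators corresponding to the relations
`c² = 1`, `ac = ca`, `bc = cb`, `a³ = c`, `b² = c`, `(ba)² = c`. -/
def relsDic3 : Set (FreeGroup Gen3) :=
  { FreeGroup.of Gen3.c ^ 2,
    FreeGroup.of Gen3.a * FreeGroup.of Gen3.c * (FreeGroup.of Gen3.a)⁻¹ * (FreeGroup.of Gen3.c)⁻¹,
    FreeGroup.of Gen3.b * FreeGroup.of Gen3.c * (FreeGroup.of Gen3.b)⁻¹ * (FreeGroup.of Gen3.c)⁻¹,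
    FreeGroup.of Gen3.a ^ 3 * (FreeGroup.of Gen3.c)⁻¹,
    FreeGroup.of Gen3.b ^ 2 * (FreeGroup.of Gen3.c)⁻¹,
    (FreeGroup.of Gen3.b * FreeGroup.of Gen3.a) ^ 2 * (FreeGroup.of Gen3.c)⁻¹ }

namespace Stmt8Aux
open PresentedGroup

abbrev G := PresentedGroup relsDic3

def A : G := PresentedGroup.of Gen3.a
def B : G := PresentedGroup.of Gen3.b
def C : G := PresentedGroup.of Gen3.c

lemma rel_one {r : FreeGroup Gen3} (hr : r ∈ relsDic3) : PresentedGroup.mk relsDic3 r = 1 :=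
  (QuotientGroup.eq_one_iff r).2 (Subgroup.subset_normalClosure hr)

lemma hC2 : C ^ 2 = 1 := by
  have h := rel_one (r := FreeGroup.of Gen3.c ^ 2) (by simp [relsDic3])
  simpa [C, PresentedGroup.of, map_pow] using h

lemma hAC : A * C = C * A := by
  have h := rel_one (r := FreeGroup.of Gen3.a * FreeGroup.of Gen3.c * (FreeGroup.of Gen3.a)⁻¹ *
      (FreeGroup.of Gen3.c)⁻¹) (by simp [relsDic3])
  have h' : A * C * A⁻¹ * C⁻¹ = 1 := by
    simpa [A, C, PresentedGroup.of, map_mul, map_inv] using h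
  have h2 : A * C * A⁻¹ = C := mul_inv_eq_one.mp h'
  conv_rhs => rw [← h2]
  rw [mul_assoc, inv_mul_cancel, mul_one]

lemma hA3 : A ^ 3 = C := by
  have h := rel_one (r := FreeGroup.of Gen3.a ^ 3 * (FreeGroup.of Gen3.c)⁻¹) (by simp [relsDic3])
  have h' : A ^ 3 * C⁻¹ = 1 := by
    simpa [A, C, PresentedGroup.of, map_mul, map_inv, map_pow] using h
  exact mul_inv_eq_one.mp h'

lemma hB2 : B ^ 2 = C := by
  have h := rel_one (r := FreeGroup.of Gen3.b ^ 2 * (FreeGroup.of Gen3.c)⁻¹) (by simp [relsDic3])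
  have h' : B ^ 2 * C⁻¹ = 1 := by
    simpa [B, C, PresentedGroup.of, map_mul, map_inv, map_pow] using h
  exact mul_inv_eq_one.mp h'

lemma hBA2 : (B * A) ^ 2 = C := by
  have h := rel_one (r := (FreeGroup.of Gen3.b * FreeGroup.of Gen3.a) ^ 2 *
      (FreeGroup.of Gen3.c)⁻¹) (by simp [relsDic3])
  have h' : (B * A) ^ 2 * C⁻¹ = 1 := by
    simpa [A, B, C, PresentedGroup.of, map_mul, map_inv, map_pow] using h
  exact mul_inv_eq_one.mp h'

lemma hA6 : A ^ 6 = 1 := by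
  have : A ^ 6 = (A ^ 3) ^ 2 := by group
  rw [this, hA3, hC2]

lemma hABA : A * B * A = B := by
  have h : B * (A * B * A) = B * B := by
    have := hBA2.trans hB2.symm
    simpa [sq, mul_assoc] using this
  exact mul_left_cancel h

lemma hAB : A * B = B * A⁻¹ := eq_mul_inv_iff_mul_eq.mpr hABA

/-- `A` to the power of an element of `ZMod 6`. -/
def P (i : ZMod 6) : G := A ^ i.val

lemma pow_mod (m : ℕ) : A ^ m = A ^ (m % 6) := by
  conv_lhs => rw [← Nat.mod_add_div m 6]
  rw [pow_add, pow_mul, hA6, one_pow, mul_one]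

lemma Padd (i j : ZMod 6) : P (i + j) = P i * P j := by
  rw [P, P, P, ← pow_add, ZMod.val_add]
  exact (pow_mod _).symm

lemma P_zero : P 0 = 1 := by simp [P]

lemma Pneg (i : ZMod 6) : P (-i) = (P i)⁻¹ :=
  eq_inv_of_mul_eq_one_left (by rw [← Padd, neg_add_cancel, P_zero])

lemma P_one : P 1 = A := by
  rw [P, show (1 : ZMod 6).val = 1 from by decide, pow_one]

lemma P_three : P 3 = C := by
  rw [← hA3, P, show (3 : ZMod 6).val = 3 from by decide]

lemma powAB : ∀ k : ℕ, A ^ k * B = B * (A ^ k)⁻¹ := by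
  intro k
  induction k with
  | zero => simp
  | succ n ih =>
    calc A ^ (n + 1) * B = A ^ n * (A * B) := by rw [pow_succ, mul_assoc]
      _ = A ^ n * B * A⁻¹ := by rw [hAB, mul_assoc]
      _ = B * (A ^ n)⁻¹ * A⁻¹ := by rw [ih]
      _ = B * (A ^ (n + 1))⁻¹ := by rw [mul_assoc, ← mul_inv_rev, ← pow_succ']

lemma PB (i : ZMod 6) : P i * B = B * P (-i) := by
  rw [Pneg, P]; exact powAB i.val

/-- Normal forms: candidate list of all 12 elements. -/
def g : Bool × ZMod 6 → G := fun p => (if p.1 then B else 1) * P p.2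

lemma g_mul_P (e : Bool) (i j : ZMod 6) : g (e, i) * P j = g (e, i + j) := by
  simp [g, mul_assoc, ← Padd]

lemma g_mul_A (e : Bool) (i : ZMod 6) : g (e, i) * A = g (e, i + 1) := by
  rw [← P_one, g_mul_P]

lemma g_mul_Ainv (e : Bool) (i : ZMod 6) : g (e, i) * A⁻¹ = g (e, i - 1) := by
  rw [← P_one, ← Pneg, g_mul_P, sub_eq_add_neg]

lemma g_mul_C (e : Bool) (i : ZMod 6) : g (e, i) * C = g (e, i + 3) := by
  rw [← P_three, g_mul_P]

lemma Cinv : C⁻¹ = C :=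
  inv_eq_of_mul_eq_one_right (by have := hC2; rwa [sq] at this)

lemma g_mul_B (e : Bool) (i : ZMod 6) :
    g (e, i) * B = g (!e, (if e then (3 : ZMod 6) else 0) - i) := by
  cases e with
  | false => simp [g, PB, sub_eq_add_neg]
  | true =>
    show B * P i * B = 1 * P (3 - i)
    rw [mul_assoc, PB, ← mul_assoc, ← sq, hB2, ← P_three, ← Padd, one_mul, sub_eq_add_neg]

lemma Binv : B⁻¹ = B * C :=
  inv_eq_of_mul_eq_one_right (by rw [← mul_assoc, ← sq, hB2, ← sq, hC2])

lemma g_surj : Function.Surjective g := by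
  intro x
  have key : ∀ y : G, (∀ p, ∃ q, g p * y = g q) ∧ (∀ p, ∃ q, g p * y⁻¹ = g q) := by
    have hx : ∀ y : G, y ∈ Subgroup.closure
        (Set.range (PresentedGroup.of : Gen3 → PresentedGroup relsDic3)) := by
      intro y; rw [closure_range_of]; trivial
    intro y
    refine Subgroup.closure_induction
      (p := fun y _ => (∀ p, ∃ q, g p * y = g q) ∧ (∀ p, ∃ q, g p * y⁻¹ = g q))
      ?_ ?_ ?_ ?_ (hx y)
    · rintro z ⟨t, rfl⟩
      have hgen : ∀ p : Bool × ZMod 6, ∀ t : Gen3, ∃ q, g p * PresentedGroup.of t = g q := by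
        rintro ⟨e, i⟩ t
        cases t with
        | a => exact ⟨_, g_mul_A e i⟩
        | b => exact ⟨_, g_mul_B e i⟩
        | c => exact ⟨_, g_mul_C e i⟩
      constructor
      · exact fun p => hgen p t
      · intro p
        cases t with
        | a => exact ⟨_, g_mul_Ainv _ _⟩
        | b =>
          obtain ⟨q, hq⟩ := hgen p Gen3.b
          refine ⟨(q.1, q.2 + 3), ?_⟩
          have hq' : g p * B = g q := hq
          rw [show (PresentedGroup.of Gen3.b : G)⁻¹ = B⁻¹ from rfl, Binv, ← mul_assoc, hq']
          exact g_mul_C q.1 q.2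
        | c =>
          rw [show (PresentedGroup.of Gen3.c : G)⁻¹ = C⁻¹ from rfl, Cinv]
          exact ⟨_, g_mul_C _ _⟩
    · exact ⟨fun p => ⟨p, by simp⟩, fun p => ⟨p, by simp⟩⟩
    · rintro u v _ _ ⟨hu1, hu2⟩ ⟨hv1, hv2⟩
      constructor
      · intro p
        obtain ⟨q, hq⟩ := hu1 p
        obtain ⟨r, hr⟩ := hv1 q
        exact ⟨r, by rw [← mul_assoc, hq, hr]⟩
      · intro p
        obtain ⟨q, hq⟩ := hv2 p
        obtain ⟨r, hr⟩ := hu2 q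
        exact ⟨r, by rw [mul_inv_rev, ← mul_assoc, hq, hr]⟩
    · rintro u _ ⟨hu1, hu2⟩
      exact ⟨hu2, by simpa using hu1⟩
  obtain ⟨q, hq⟩ := (key x).1 (false, 0)
  refine ⟨q, ?_⟩
  rw [← hq]
  simp [g, P_zero]

/-- Image of generators in the quaternion (dicyclic) group. -/
def φ : Gen3 → QuaternionGroup 3
  | Gen3.a => QuaternionGroup.a 1
  | Gen3.b => QuaternionGroup.xa 0
  | Gen3.c => QuaternionGroup.a 3

lemma hrels : ∀ r ∈ relsDic3, FreeGroup.lift φ r = 1 := by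
  intro r hr
  simp only [relsDic3, Set.mem_insert_iff, Set.mem_singleton_iff] at hr
  rcases hr with rfl | rfl | rfl | rfl | rfl | rfl <;>
    · simp only [map_mul, map_pow, map_inv, FreeGroup.lift_apply_of, φ]
      decide

def f : G →* QuaternionGroup 3 := PresentedGroup.toGroup hrels

lemma fA : f A = QuaternionGroup.a 1 := toGroup.of hrels
lemma fB : f B = QuaternionGroup.xa 0 := toGroup.of hrels
lemma fC : f C = QuaternionGroup.a 3 := toGroup.of hrels

lemma fP (i : ZMod 6) : f (P i) = QuaternionGroup.a i := by
  rw [P, map_pow, fA, QuaternionGroup.a_one_pow]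
  congr 1
  simp [ZMod.natCast_val, ZMod.cast_id]

lemma fg (e : Bool) (i : ZMod 6) :
    f (g (e, i)) = if e then QuaternionGroup.xa i else QuaternionGroup.a i := by
  cases e with
  | false => simp [g, fP]
  | true =>
    show f (B * P i) = QuaternionGroup.xa i
    rw [map_mul, fB, fP, QuaternionGroup.xa_mul_a, zero_add]

theorem main : Nonempty (PresentedGroup relsDic3 ≃* QuaternionGroup 3) := by
  have hsurj : Function.Surjective f := by
    intro y
    cases y with
    | a i => exact ⟨g (false, i), by simp [fg]⟩
    | xa i => exact ⟨g (true, i), by simp [fg]⟩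
  have hinj : Function.Injective f := by
    intro x y h
    obtain ⟨⟨e, i⟩, rfl⟩ := g_surj x
    obtain ⟨⟨e', i'⟩, rfl⟩ := g_surj y
    rw [fg, fg] at h
    cases e <;> cases e' <;> simp_all
  exact ⟨MulEquiv.ofBijective f ⟨hinj, hsurj⟩⟩

end Stmt8Aux

/-- The group presented by `⟨a,b,c ∣ c² = [a,c] = [b,c] = 1, a³ = b² = (ba)² = c⟩` is
isomorphic to the dicyclic group of order `12` (Mathlib's `QuaternionGroup 3`), i.e. the
semidirect product `C₃ ⋊ C₄`. -/
theorem stmt8 : Nonempty (PresentedGroup relsDic3 ≃* QuaternionGroup 3) := Stmt8Aux.main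
end

section
/- The group presented on three generators a, b, c with relations c² = 1, ac = ca, bc = cb, a⁶ = c, b² = c, and (ba)² = c is isomorphic to the dicyclic group of order 24 (Mathlib's QuaternionGroup 6), which is a semidirect product C₃ ⋊ Q₈ with normal subgroup C₃ generated by a²c and complement Q₈ generated by a³c and b. -/
/-- Relators corresponding to the relations
`c² = 1`, `ac = ca`, `bc = cb`, `a⁶ = c`, `b² = c`, `(ba)² = c`. -/
def relsDic6 : Set (FreeGroup Gen3) :=
  { FreeGroup.of Gen3.c ^ 2,
    FreeGroup.of Gen3.a * FreeGroup.of Gen3.c * (FreeGroup.of Gen3.a)⁻¹ * (FreeGroup.of Gen3.c)⁻¹,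
    FreeGroup.of Gen3.b * FreeGroup.of Gen3.c * (FreeGroup.of Gen3.b)⁻¹ * (FreeGroup.of Gen3.c)⁻¹,
    FreeGroup.of Gen3.a ^ 6 * (FreeGroup.of Gen3.c)⁻¹,
    FreeGroup.of Gen3.b ^ 2 * (FreeGroup.of Gen3.c)⁻¹,
    (FreeGroup.of Gen3.b * FreeGroup.of Gen3.a) ^ 2 * (FreeGroup.of Gen3.c)⁻¹ }

/-- The images of the generators in the presented group. -/
noncomputable def pa : PresentedGroup relsDic6 := PresentedGroup.of Gen3.a
noncomputable def pb : PresentedGroup relsDic6 := PresentedGroup.of Gen3.b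
noncomputable def pc : PresentedGroup relsDic6 := PresentedGroup.of Gen3.c

namespace Dic6
open QuaternionGroup

abbrev P := PresentedGroup relsDic6
abbrev Q := QuaternionGroup 6

def fgen : Gen3 → Q
  | .a => a 1
  | .b => xa 0
  | .c => a 6

lemma frels : ∀ r ∈ relsDic6, FreeGroup.lift fgen r = 1 := by
  intro r hr
  simp only [relsDic6, Set.mem_insert_iff, Set.mem_singleton_iff] at hr
  rcases hr with rfl|rfl|rfl|rfl|rfl|rfl <;>
    simp only [map_mul, map_pow, map_inv, FreeGroup.lift_apply_of, fgen] <;> decide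

noncomputable def f : P →* Q := PresentedGroup.toGroup frels

lemma rel_mk {r : FreeGroup Gen3} (h : r ∈ relsDic6) : PresentedGroup.mk relsDic6 r = 1 :=
  (QuotientGroup.eq_one_iff _).mpr (Subgroup.subset_normalClosure h)

lemma hc2 : pc ^ 2 = 1 := by
  have := rel_mk (show FreeGroup.of Gen3.c ^ 2 ∈ relsDic6 by left; rfl)
  simpa [pc, PresentedGroup.of, map_pow] using this

lemma hac : pa * pc = pc * pa := by
  have h := rel_mk (show _ ∈ relsDic6 by right; left; rfl)
  simp only [map_mul, map_inv] at h
  rw [mul_inv_eq_one] at h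
  rw [mul_inv_eq_iff_eq_mul] at h
  simpa [pa, pc, PresentedGroup.of] using h

lemma hbc : pb * pc = pc * pb := by
  have h := rel_mk (show _ ∈ relsDic6 by right; right; left; rfl)
  simp only [map_mul, map_inv] at h
  rw [mul_inv_eq_one] at h
  rw [mul_inv_eq_iff_eq_mul] at h
  simpa [pb, pc, PresentedGroup.of] using h

lemma hb2 : pb ^ 2 = pc := by
  have h := rel_mk (show FreeGroup.of Gen3.b ^ 2 * (FreeGroup.of Gen3.c)⁻¹ ∈ relsDic6 by
    right; right; right; right; left; rfl)
  simp only [map_mul, map_pow, map_inv] at h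
  exact eq_of_mul_inv_eq_one h

lemma hba : (pb * pa) ^ 2 = pc := by
  have h := rel_mk (show (FreeGroup.of Gen3.b * FreeGroup.of Gen3.a) ^ 2 *
      (FreeGroup.of Gen3.c)⁻¹ ∈ relsDic6 by
    right; right; right; right; right; rfl)
  simp only [map_mul, map_pow, map_inv] at h
  exact eq_of_mul_inv_eq_one h

lemma ha6 : pa ^ 6 = pc := by
  have := rel_mk (show FreeGroup.of Gen3.a ^ 6 * (FreeGroup.of Gen3.c)⁻¹ ∈ relsDic6 by
    right; right; right; left; rfl)
  simp only [map_mul, map_pow, map_inv] at this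
  exact eq_of_mul_inv_eq_one this


lemma hpa12 : pa ^ (12 : ℕ) = 1 := by
  rw [show (12:ℕ) = 6*2 from rfl, pow_mul, ha6, hc2]

lemma hconj : pb * pa * pb⁻¹ = pa⁻¹ := by
  have h1 : pb * pa * (pb * pa) = pb * pb := by
    rw [← sq, ← sq, hba, hb2]
  have h2 : pa * pb * pa = pb := by
    apply mul_left_cancel (a := pb)
    have := h1
    simp only [mul_assoc] at this ⊢
    rw [this]
  have h3 : pb * pa = pa⁻¹ * pb := by
    rw [eq_comm, inv_mul_eq_iff_eq_mul, ← mul_assoc, h2]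
  rw [h3, mul_assoc, mul_inv_cancel, mul_one]

lemma hcomm (k : ℤ) : pb * pa ^ k = pa ^ (-k) * pb := by
  have h := map_zpow (MulAut.conj pb) pa k
  simp only [MulAut.conj_apply, hconj] at h
  rw [inv_zpow', ] at h
  calc pb * pa ^ k = pb * pa ^ k * pb⁻¹ * pb := by group
  _ = pa ^ (-k) * pb := by rw [h]

lemma hpa12Z : pa ^ (12 : ℤ) = 1 := by
  rw [show (12:ℤ) = ((12:ℕ):ℤ) from rfl, zpow_natCast, hpa12]

lemma hmod {m k : ℤ} (h : (m : ZMod 12) = (k : ZMod 12)) : pa ^ m = pa ^ k := by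
  have hd : (12 : ℤ) ∣ m - k := by
    have := (ZMod.intCast_eq_intCast_iff' m k 12).mp (by exact_mod_cast h)
    omega
  obtain ⟨t, ht⟩ := hd
  have hm : m = k + 12 * t := by omega
  rw [hm, zpow_add, zpow_mul, hpa12Z, one_zpow, mul_one]

lemma natValCast (i : ZMod (2*6)) : ((i.val : ℕ) : ZMod 12) = i :=
  ZMod.natCast_rightInverse i

lemma hpbpb : pb * pb = pa ^ ((6:ℕ) : ℤ) := by
  rw [zpow_natCast, ha6, ← sq, hb2]

noncomputable def gfun : Q → P
  | .a i => pa ^ ((i.val : ℤ))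
  | .xa i => pb * pa ^ ((i.val : ℤ))

lemma gmul : ∀ x y : Q, gfun (x * y) = gfun x * gfun y := by
  rintro (i | i) (j | j)
  · show gfun (a (i + j)) = _
    show pa ^ (((i+j).val : ℤ)) = pa ^ ((i.val : ℤ)) * pa ^ ((j.val : ℤ))
    rw [← zpow_add]
    exact hmod (by push_cast; simp [natValCast])
  · show gfun (xa (j - i)) = _
    show pb * pa ^ (((j-i).val : ℤ)) = pa ^ ((i.val : ℤ)) * (pb * pa ^ ((j.val : ℤ)))
    have e1 : pa ^ ((i.val : ℤ)) * pb = pb * pa ^ (-(i.val : ℤ)) := by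
      rw [hcomm (-(i.val : ℤ)), neg_neg]
    calc pb * pa ^ (((j-i).val : ℤ)) = pb * pa ^ (-(i.val : ℤ) + (j.val : ℤ)) := by
          congr 1
          exact hmod (by push_cast; simp [natValCast]; ring)
      _ = (pb * pa ^ (-(i.val : ℤ))) * pa ^ ((j.val : ℤ)) := by rw [zpow_add]; group
      _ = (pa ^ ((i.val : ℤ)) * pb) * pa ^ ((j.val : ℤ)) := by rw [e1]
      _ = pa ^ ((i.val : ℤ)) * (pb * pa ^ ((j.val : ℤ))) := by group
  · show gfun (xa (i + j)) = _
    show pb * pa ^ (((i+j).val : ℤ)) = pb * pa ^ ((i.val : ℤ)) * pa ^ ((j.val : ℤ))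
    rw [mul_assoc, ← zpow_add]
    congr 1
    exact hmod (by push_cast; simp [natValCast])
  · show gfun (a (((6:ℕ) : ZMod (2*6)) + j - i)) = _
    show pa ^ (((((6:ℕ) : ZMod (2*6)) + j - i).val : ℤ)) =
      pb * pa ^ ((i.val : ℤ)) * (pb * pa ^ ((j.val : ℤ)))
    have e1 : pa ^ ((i.val : ℤ)) * pb = pb * pa ^ (-(i.val : ℤ)) := by
      rw [hcomm (-(i.val : ℤ)), neg_neg]
    calc pa ^ (((((6:ℕ) : ZMod (2*6)) + j - i).val : ℤ))
        = pa ^ (((6:ℕ):ℤ) + (-(i.val : ℤ) + (j.val : ℤ))) := by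
          exact hmod (by push_cast; simp [natValCast]; ring)
      _ = pa ^ ((6:ℕ):ℤ) * (pa ^ (-(i.val : ℤ)) * pa ^ ((j.val : ℤ))) := by
          rw [zpow_add, zpow_add]
      _ = (pb * pb) * (pa ^ (-(i.val : ℤ)) * pa ^ ((j.val : ℤ))) := by rw [hpbpb]
      _ = pb * (pb * pa ^ (-(i.val : ℤ))) * pa ^ ((j.val : ℤ)) := by group
      _ = pb * (pa ^ ((i.val : ℤ)) * pb) * pa ^ ((j.val : ℤ)) := by rw [e1]
      _ = pb * pa ^ ((i.val : ℤ)) * (pb * pa ^ ((j.val : ℤ))) := by group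

noncomputable def g : Q →* P := MonoidHom.mk' gfun gmul

lemma f_pa : f pa = a 1 := PresentedGroup.toGroup.of frels
lemma f_pb : f pb = xa 0 := PresentedGroup.toGroup.of frels
lemma f_pc : f pc = a (6:ℕ) := PresentedGroup.toGroup.of frels

lemma gf : g.comp f = MonoidHom.id P := by
  apply PresentedGroup.ext
  intro x
  cases x
  · show g (f pa) = pa
    rw [f_pa]
    show pa ^ (((1 : ZMod (2*6)).val : ℤ)) = pa
    have h1 : (((1 : ZMod (2*6)).val : ℤ)) = 1 := by decide
    rw [h1, zpow_one]
  · show g (f pb) = pb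
    rw [f_pb]
    show pb * pa ^ (((0 : ZMod (2*6)).val : ℤ)) = pb
    have h0 : (((0 : ZMod (2*6)).val : ℤ)) = 0 := by decide
    rw [h0, zpow_zero, mul_one]
  · show g (f pc) = pc
    rw [f_pc]
    show pa ^ ((((6:ℕ) : ZMod (2*6)).val : ℤ)) = pc
    have h6 : ((((6:ℕ) : ZMod (2*6)).val : ℤ)) = ((6:ℕ) : ℤ) := by decide
    rw [h6, zpow_natCast, ha6]

lemma fg : f.comp g = MonoidHom.id Q := by
  ext q
  show f (g q) = q
  cases q with
  | a i =>
    show f (pa ^ ((i.val : ℤ))) = a i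
    rw [map_zpow, f_pa, zpow_natCast, a_one_pow, natValCast]
  | xa i =>
    show f (pb * pa ^ ((i.val : ℤ))) = xa i
    rw [map_mul, map_zpow, f_pa, f_pb, zpow_natCast, a_one_pow, natValCast, xa_mul_a, zero_add]

noncomputable def e : P ≃* Q := MonoidHom.toMulEquiv f g gf fg

lemma e_x3 : e (pa ^ 2 * pc) = a (8:ℕ) := by
  show f (pa ^ 2 * pc) = a (8:ℕ)
  rw [map_mul, map_pow, f_pa, f_pc]
  decide

lemma e_x9 : e (pa ^ 3 * pc) = a (9:ℕ) := by
  show f (pa ^ 3 * pc) = a (9:ℕ)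
  rw [map_mul, map_pow, f_pa, f_pc]
  decide

lemma e_b : e pb = xa 0 := f_pb

def psifun : Multiplicative (ZMod 3) → Q := fun x => a ((4 * x.toAdd.val : ℕ))

def psi : Multiplicative (ZMod 3) →* Q :=
  MonoidHom.mk' psifun (by decide)

lemma psi_inj : Function.Injective psi := by decide

def phifun : QuaternionGroup 2 → Q
  | .a i => a ((9 * i.val : ℕ))
  | .xa i => xa ((9 * i.val : ℕ))

def phi : QuaternionGroup 2 →* Q :=
  MonoidHom.mk' phifun (by decide)

lemma phi_inj : Function.Injective phi := by decide

lemma range3 : Subgroup.closure {(a (8:ℕ) : Q)} = psi.range := by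
  apply le_antisymm
  · rw [Subgroup.closure_le]
    rintro x rfl
    exact ⟨Multiplicative.ofAdd 2, by decide⟩
  · rintro x ⟨y, rfl⟩
    have h : psi y = 1 ∨ psi y = a (8:ℕ) ∨ psi y = a (8:ℕ) * a (8:ℕ) := by
      revert y; decide
    rcases h with h | h | h <;> rw [h]
    · exact one_mem _
    · exact Subgroup.subset_closure rfl
    · exact mul_mem (Subgroup.subset_closure rfl) (Subgroup.subset_closure rfl)

lemma range8 : Subgroup.closure {(a (9:ℕ) : Q), xa 0} = phi.range := by
  apply le_antisymm
  · rw [Subgroup.closure_le]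
    rintro x (rfl | rfl)
    · exact ⟨QuaternionGroup.a 1, by decide⟩
    · exact ⟨QuaternionGroup.xa 0, by decide⟩
  · rintro x ⟨y, rfl⟩
    have h9 : (a (9:ℕ) : Q) ∈ Subgroup.closure {(a (9:ℕ) : Q), xa 0} :=
      Subgroup.subset_closure (Set.mem_insert _ _)
    have hx0 : (xa 0 : Q) ∈ Subgroup.closure {(a (9:ℕ) : Q), xa 0} :=
      Subgroup.subset_closure (Set.mem_insert_of_mem _ rfl)
    have h : phi y = 1 ∨ phi y = a (9:ℕ) ∨ phi y = a (9:ℕ) ^ 2 ∨ phi y = a (9:ℕ) ^ 3 ∨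
        phi y = xa 0 ∨ phi y = xa 0 * a (9:ℕ) ∨ phi y = xa 0 * a (9:ℕ) ^ 2 ∨
        phi y = xa 0 * a (9:ℕ) ^ 3 := by
      revert y; decide
    rcases h with h|h|h|h|h|h|h|h <;> rw [h]
    · exact one_mem _
    · exact h9
    · exact pow_mem h9 2
    · exact pow_mem h9 3
    · exact hx0
    · exact mul_mem hx0 h9
    · exact mul_mem hx0 (pow_mem h9 2)
    · exact mul_mem hx0 (pow_mem h9 3)

lemma normal3Q : (Subgroup.closure {(a (8:ℕ) : Q)}).Normal := by
  rw [range3]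
  constructor
  intro x hx gq
  obtain ⟨y, rfl⟩ := hx
  have h : ∀ (gq : Q) (y : Multiplicative (ZMod 3)), ∃ z, psi z = gq * psi y * gq⁻¹ := by decide
  obtain ⟨z, hz⟩ := h gq y
  exact ⟨z, hz⟩

lemma inf3_8 : Subgroup.closure {(a (8:ℕ) : Q)} ⊓ Subgroup.closure {(a (9:ℕ) : Q), xa 0} = ⊥ := by
  rw [range3, range8]
  rw [eq_bot_iff]
  rintro x ⟨⟨y, hy⟩, ⟨z, hz⟩⟩
  have h : ∀ (y : Multiplicative (ZMod 3)) (z : QuaternionGroup 2),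
      psi y = phi z → psi y = 1 := by decide
  rw [Subgroup.mem_bot, ← hy]
  exact h y z (hy.trans hz.symm)

lemma sup3_8 : Subgroup.closure {(a (8:ℕ) : Q)} ⊔ Subgroup.closure {(a (9:ℕ) : Q), xa 0} = ⊤ := by
  rw [eq_top_iff]
  set S := Subgroup.closure {(a (8:ℕ) : Q)} ⊔ Subgroup.closure {(a (9:ℕ) : Q), xa 0} with hS
  have h8 : (a (8:ℕ) : Q) ∈ S :=
    le_sup_left (α := Subgroup Q) (Subgroup.subset_closure rfl)
  have h9 : (a (9:ℕ) : Q) ∈ S :=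
    le_sup_right (α := Subgroup Q) (Subgroup.subset_closure (Set.mem_insert _ _))
  have hx0 : (xa 0 : Q) ∈ S :=
    le_sup_right (α := Subgroup Q) (Subgroup.subset_closure (Set.mem_insert_of_mem _ rfl))
  have h1 : (a 1 : Q) ∈ S := by
    have : (a 1 : Q) = a (9:ℕ) * (a (8:ℕ))⁻¹ := by decide
    rw [this]
    exact mul_mem h9 (inv_mem h8)
  intro x _
  cases x with
  | a i =>
    have : (a i : Q) = (a 1) ^ i.val := by rw [a_one_pow, natValCast]
    rw [this]
    exact pow_mem h1 _
  | xa i =>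
    have : (xa i : Q) = xa 0 * (a 1) ^ i.val := by
      rw [a_one_pow, natValCast, xa_mul_a, zero_add]
    rw [this]
    exact mul_mem hx0 (pow_mem h1 _)

noncomputable def em : P →* Q := (e : P →* Q)

lemma hm3 : (Subgroup.closure {pa ^ 2 * pc}).map em = Subgroup.closure {(a (8:ℕ) : Q)} := by
  rw [MonoidHom.map_closure, Set.image_singleton]
  congr 1

lemma hm8 : (Subgroup.closure {pa ^ 3 * pc, pb}).map em =
    Subgroup.closure {(a (9:ℕ) : Q), xa 0} := by
  rw [MonoidHom.map_closure, Set.image_pair]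
  congr 1

lemma normal3P : (Subgroup.closure {pa ^ 2 * pc}).Normal := by
  have h := Subgroup.Normal.comap normal3Q em
  have hcm : Subgroup.comap em ((Subgroup.closure {pa ^ 2 * pc}).map em) =
      Subgroup.closure {pa ^ 2 * pc} :=
    Subgroup.comap_map_eq_self_of_injective e.injective _
  rw [hm3] at hcm
  rw [← hcm]
  exact h

noncomputable def iso3 : (Subgroup.closure {pa ^ 2 * pc} : Subgroup P) ≃* Multiplicative (ZMod 3) :=
  ((e.subgroupMap _).trans (MulEquiv.subgroupCongr (hm3.trans range3))).trans
    (MonoidHom.ofInjective psi_inj).symm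

noncomputable def iso8 : (Subgroup.closure {pa ^ 3 * pc, pb} : Subgroup P) ≃* QuaternionGroup 2 :=
  ((e.subgroupMap _).trans (MulEquiv.subgroupCongr (hm8.trans range8))).trans
    (MonoidHom.ofInjective phi_inj).symm

lemma infP : Subgroup.closure {pa ^ 2 * pc} ⊓ Subgroup.closure {pa ^ 3 * pc, pb} = ⊥ := by
  apply Subgroup.map_injective (f := em) e.injective
  rw [Subgroup.map_inf _ _ em e.injective, hm3, hm8, inf3_8]
  rw [eq_comm, Subgroup.map_eq_bot_iff]
  exact bot_le

lemma supP : Subgroup.closure {pa ^ 2 * pc} ⊔ Subgroup.closure {pa ^ 3 * pc, pb} = ⊤ := by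
  apply Subgroup.map_injective (f := em) e.injective
  rw [Subgroup.map_sup, hm3, hm8, sup3_8]
  exact (Subgroup.map_top_of_surjective em e.surjective).symm

end Dic6

/-- The group presented by `⟨a,b,c ∣ c² = [a,c] = [b,c] = 1, a⁶ = b² = (ba)² = c⟩` is
isomorphic to the dicyclic group of order `24` (Mathlib's `QuaternionGroup 6`), which is a
semidirect product `C₃ ⋊ Q₈` with normal subgroup `C₃ = ⟨a²c⟩` and complement
`Q₈ = ⟨a³c, b⟩`. -/
theorem stmt9 :
    Nonempty (PresentedGroup relsDic6 ≃* QuaternionGroup 6) ∧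
    (Subgroup.closure {pa ^ 2 * pc}).Normal ∧
    Nonempty ((Subgroup.closure {pa ^ 2 * pc} : Subgroup (PresentedGroup relsDic6)) ≃*
      Multiplicative (ZMod 3)) ∧
    Nonempty ((Subgroup.closure {pa ^ 3 * pc, pb} : Subgroup (PresentedGroup relsDic6)) ≃*
      QuaternionGroup 2) ∧
    Subgroup.closure {pa ^ 2 * pc} ⊓ Subgroup.closure {pa ^ 3 * pc, pb} = ⊥ ∧
    Subgroup.closure {pa ^ 2 * pc} ⊔ Subgroup.closure {pa ^ 3 * pc, pb} = ⊤ := by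
  exact ⟨⟨Dic6.e⟩, Dic6.normal3P, ⟨Dic6.iso3⟩, ⟨Dic6.iso8⟩, Dic6.infP, Dic6.supP⟩
end
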